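/- arXiv:0905.2259 — 2 statements merged into one kernel-verified Lean document; each statement's English description precedes it below -/
import Mathlib

section
/- With $\nu$ as in the invariant-measure theorem, the second marginal satisfies $\nu_2(y):=\sum_x \nu(x,y)=\mathbb{E}_\pi(p(C_0,y)H_y)$, where $H_y=\inf\{n>0:C_n=y\}$ and $\mathbb{E}_\pi$ denotes expectation with $C_0$ distributed according to $\pi$. -/
open MeasureTheory Filter Set Classical
open scoped ENNReal BigOperators Topology
noncomputable section
attribute [local instance] Classical.propDecidable

/-- Cylinder law of a Markov chain with transition matrix `p` started at `x`. -/
def IsMarkovChainLaw {S : Type*} [MeasurableSpace S]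
    (p : S → S → ℝ≥0∞) (μ : S → Measure (ℕ → S)) : Prop :=
  ∀ x : S, ∀ n : ℕ, ∀ c : ℕ → S,
    μ x {ω | ∀ i ≤ n, ω i = c i}
      = if c 0 = x then ∏ i ∈ Finset.range n, p (c i) (c (i + 1)) else 0

/-- `∑_{n=1}^{H_y} p(ω_n, y)`, where `H_y = inf{n > 0 : ω_n = y}`. -/
def sumToHit {S : Type*} (p : S → S → ℝ≥0∞) (y : S) (ω : ℕ → S) : ℝ≥0∞ :=
  ∑' n : ℕ, if 1 ≤ n ∧ (∀ k, 1 ≤ k → k < n → ω k ≠ y) then p (ω n) y else 0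

/-- The first return time `H_y = inf{n > 0 : ω_n = y}` (with value `∞` if never),
counted as `∑_{n ≥ 1} 1_{n ≤ H_y}`. -/
def hitTime {S : Type*} (y : S) (ω : ℕ → S) : ℝ≥0∞ :=
  ∑' n : ℕ, if 1 ≤ n ∧ (∀ k, 1 ≤ k → k < n → ω k ≠ y) then 1 else 0

set_option linter.unusedSectionVars false
set_option linter.unusedVariables false

namespace NuAux
variable {S : Type*} [MeasurableSpace S] [MeasurableSingletonClass S] [Countable S]

def ext (m : ℕ) (c : Fin (m + 1) → S) : ℕ → S := fun i => c ⟨min i m, by omega⟩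

lemma ext_eq {m : ℕ} (c : Fin (m+1) → S) {i : ℕ} (hi : i ≤ m) :
    ext m c i = c ⟨i, by omega⟩ := by
  simp [ext, Nat.min_eq_left hi]

lemma measurable_dep (m : ℕ) (g : (ℕ → S) → ℝ≥0∞)
    (hg : ∀ ω ω' : ℕ → S, (∀ i ≤ m, ω i = ω' i) → g ω = g ω') : Measurable g := by
  have hkey : g = (fun c : Fin (m+1) → S => g (ext m c)) ∘ (fun ω (i : Fin (m+1)) => ω i.val) := by
    funext ω
    exact hg ω (ext m (fun i => ω i.val)) (fun i hi => by rw [ext_eq _ hi])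
  rw [hkey]
  exact (measurable_of_countable _).comp (measurable_pi_lambda _ fun i => measurable_pi_apply _)

lemma measurableSet_cyl (m : ℕ) (v : ℕ → S) :
    MeasurableSet {ω' : ℕ → S | ∀ i ≤ m, ω' i = v i} := by
  have : {ω' : ℕ → S | ∀ i ≤ m, ω' i = v i}
      = ⋂ (i : ℕ), ⋂ (_ : i ≤ m), (fun ω' : ℕ → S => ω' i) ⁻¹' {v i} := by
    ext ω'; simp
  rw [this]
  exact MeasurableSet.iInter fun i => MeasurableSet.iInter fun _ =>
    (measurable_pi_apply i) (measurableSet_singleton _)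

lemma lintegral_cyl (p : S → S → ℝ≥0∞) (μ : S → Measure (ℕ → S))
    (hμ : IsMarkovChainLaw p μ) (x : S) (m : ℕ) (g : (ℕ → S) → ℝ≥0∞)
    (hg : ∀ ω ω' : ℕ → S, (∀ i ≤ m, ω i = ω' i) → g ω = g ω') :
    ∫⁻ ω, g ω ∂ μ x = ∑' c : Fin (m+1) → S,
      g (ext m c) * (if ext m c 0 = x then
        ∏ i ∈ Finset.range m, p (ext m c i) (ext m c (i+1)) else 0) := by
  have hrep : ∀ ω : ℕ → S, g ω
      = ∑' c : Fin (m+1) → S,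
          Set.indicator {ω' | ∀ i ≤ m, ω' i = ext m c i} (fun _ => g (ext m c)) ω := by
    intro ω
    rw [tsum_eq_single (fun i : Fin (m+1) => ω i.val) ?_]
    · have hmem : ω ∈ {ω' : ℕ → S | ∀ i ≤ m, ω' i = ext m (fun i : Fin (m+1) => ω i.val) i} := by
        intro i hi; rw [ext_eq _ hi]
      rw [Set.indicator_of_mem hmem]
      exact hg ω _ (fun i hi => by rw [ext_eq _ hi])
    · intro c hc
      apply Set.indicator_of_notMem
      intro hmem
      apply hc
      funext i
      have h1 := hmem i.val (by omega)
      rw [ext_eq c (by omega : i.val ≤ m)] at h1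
      simp [← h1]
  calc ∫⁻ ω, g ω ∂ μ x
      = ∫⁻ ω, ∑' c : Fin (m+1) → S,
          Set.indicator {ω' | ∀ i ≤ m, ω' i = ext m c i} (fun _ => g (ext m c)) ω ∂ μ x :=
        lintegral_congr hrep
    _ = ∑' c : Fin (m+1) → S, ∫⁻ ω,
          Set.indicator {ω' | ∀ i ≤ m, ω' i = ext m c i} (fun _ => g (ext m c)) ω ∂ μ x :=
        lintegral_tsum fun c =>
          ((measurable_const.indicator (measurableSet_cyl m (ext m c))).aemeasurable)
    _ = ∑' c : Fin (m+1) → S, g (ext m c) * μ x {ω' | ∀ i ≤ m, ω' i = ext m c i} := by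
        refine tsum_congr fun c => ?_
        rw [lintegral_indicator_const (measurableSet_cyl m (ext m c))]
    _ = _ := by
        refine tsum_congr fun c => ?_
        rw [hμ x m (ext m c)]

lemma telescope (p pstar : S → S → ℝ≥0∞) (π : S → ℝ≥0∞)
    (hpstar : ∀ x y, pstar x y * π x = π y * p y x) (d : ℕ → S) (n : ℕ) :
    π (d 0) * ∏ i ∈ Finset.range n, pstar (d i) (d (i+1))
      = π (d n) * ∏ i ∈ Finset.range n, p (d (i+1)) (d i) := by
  induction n with
  | zero => simp
  | succ n ih =>
    rw [Finset.prod_range_succ, Finset.prod_range_succ, ← mul_assoc, ih]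
    have h := hpstar (d n) (d (n+1))
    calc π (d n) * (∏ i ∈ Finset.range n, p (d (i+1)) (d i)) * pstar (d n) (d (n+1))
        = (pstar (d n) (d (n+1)) * π (d n)) * ∏ i ∈ Finset.range n, p (d (i+1)) (d i) := by ring
      _ = (π (d (n+1)) * p (d (n+1)) (d n)) * ∏ i ∈ Finset.range n, p (d (i+1)) (d i) := by rw [h]
      _ = _ := by ring

def revE (n : ℕ) : (Fin (n+1) → S) ≃ (Fin (n+1) → S) where
  toFun c := c ∘ Fin.rev
  invFun c := c ∘ Fin.rev
  left_inv c := funext fun i => by simp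
  right_inv c := funext fun i => by simp

lemma ext_revE (n : ℕ) (c : Fin (n+1) → S) (k : ℕ) :
    ext n (revE n c) k = ext n c (n - k) := by
  show c (Fin.rev ⟨min k n, by omega⟩) = c ⟨min (n - k) n, by omega⟩
  congr 1
  apply Fin.ext
  simp [Fin.val_rev]
  omega


lemma tsum_rev (n : ℕ) (F G : (Fin (n+1) → S) → ℝ≥0∞)
    (h : ∀ c, F (revE n c) = G c) : ∑' c, F c = ∑' c, G c := by
  rw [← Equiv.tsum_eq (revE n) F]
  exact tsum_congr h

lemma key_step (p pstar : S → S → ℝ≥0∞) (π : S → ℝ≥0∞)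
    (hpstar : ∀ x y, pstar x y * π x = π y * p y x)
    (μstar μ : S → Measure (ℕ → S))
    (hμstar : IsMarkovChainLaw pstar μstar) (hμ : IsMarkovChainLaw p μ)
    (y : S) (n : ℕ) :
    (∑' x, π x * ∫⁻ ω, (if 1 ≤ n ∧ (∀ k, 1 ≤ k → k < n → ω k ≠ y)
        then p (ω n) y else 0) ∂ μstar x)
    = ∑' x, π x * p x y * ∫⁻ ω, (if 1 ≤ n ∧ (∀ k, 1 ≤ k → k < n → ω k ≠ y)
        then 1 else 0) ∂ μ x := by
  rcases Nat.eq_zero_or_pos n with hn | hn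
  · subst hn
    simp [show ¬ (1:ℕ) ≤ 0 by omega]
  have hiff : ∀ ω ω' : ℕ → S, (∀ i ≤ n, ω i = ω' i) →
      ((1 ≤ n ∧ ∀ k, 1 ≤ k → k < n → ω k ≠ y) ↔ (1 ≤ n ∧ ∀ k, 1 ≤ k → k < n → ω' k ≠ y)) := by
    intro ω ω' h
    constructor <;> rintro ⟨h1, h2⟩ <;> refine ⟨h1, fun k hk1 hk2 => ?_⟩
    · rw [← h k hk2.le]; exact h2 k hk1 hk2
    · rw [h k hk2.le]; exact h2 k hk1 hk2
  have hfdep : ∀ ω ω' : ℕ → S, (∀ i ≤ n, ω i = ω' i) →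
      (if 1 ≤ n ∧ (∀ k, 1 ≤ k → k < n → ω k ≠ y) then p (ω n) y else 0)
      = (if 1 ≤ n ∧ (∀ k, 1 ≤ k → k < n → ω' k ≠ y) then p (ω' n) y else 0) := by
    intro ω ω' h
    by_cases hc : 1 ≤ n ∧ ∀ k, 1 ≤ k → k < n → ω k ≠ y
    · rw [if_pos hc, if_pos ((hiff ω ω' h).mp hc), h n le_rfl]
    · rw [if_neg hc, if_neg (fun hc' => hc ((hiff ω ω' h).mpr hc'))]
  have hgdep : ∀ ω ω' : ℕ → S, (∀ i ≤ n, ω i = ω' i) →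
      (if 1 ≤ n ∧ (∀ k, 1 ≤ k → k < n → ω k ≠ y) then (1:ℝ≥0∞) else 0)
      = (if 1 ≤ n ∧ (∀ k, 1 ≤ k → k < n → ω' k ≠ y) then 1 else 0) := by
    intro ω ω' h
    by_cases hc : 1 ≤ n ∧ ∀ k, 1 ≤ k → k < n → ω k ≠ y
    · rw [if_pos hc, if_pos ((hiff ω ω' h).mp hc)]
    · rw [if_neg hc, if_neg (fun hc' => hc ((hiff ω ω' h).mpr hc'))]
  calc (∑' x, π x * ∫⁻ ω, (if 1 ≤ n ∧ (∀ k, 1 ≤ k → k < n → ω k ≠ y)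
        then p (ω n) y else 0) ∂ μstar x)
      = ∑' x, ∑' c : Fin (n+1) → S,
          π x * ((if 1 ≤ n ∧ (∀ k, 1 ≤ k → k < n → ext n c k ≠ y) then p (ext n c n) y else 0)
            * (if ext n c 0 = x then
                ∏ i ∈ Finset.range n, pstar (ext n c i) (ext n c (i+1)) else 0)) := by
        refine tsum_congr fun x => ?_
        rw [lintegral_cyl pstar μstar hμstar x n _ hfdep, ENNReal.tsum_mul_left]
    _ = ∑' c : Fin (n+1) → S, ∑' x,
          π x * ((if 1 ≤ n ∧ (∀ k, 1 ≤ k → k < n → ext n c k ≠ y) then p (ext n c n) y else 0)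
            * (if ext n c 0 = x then
                ∏ i ∈ Finset.range n, pstar (ext n c i) (ext n c (i+1)) else 0)) :=
        ENNReal.tsum_comm
    _ = ∑' c : Fin (n+1) → S,
          (if 1 ≤ n ∧ (∀ k, 1 ≤ k → k < n → ext n c k ≠ y) then p (ext n c n) y else 0)
          * (π (ext n c 0) * ∏ i ∈ Finset.range n, pstar (ext n c i) (ext n c (i+1))) := by
        refine tsum_congr fun c => ?_
        refine (tsum_eq_single (ext n c 0) fun x hx => ?_).trans ?_
        · have h0 : (if ext n c 0 = x then
              ∏ i ∈ Finset.range n, pstar (ext n c i) (ext n c (i+1)) else (0:ℝ≥0∞)) = 0 :=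
            if_neg fun h => hx h.symm
          rw [h0, mul_zero, mul_zero]
        · have h1 : (if ext n c 0 = ext n c 0 then
              ∏ i ∈ Finset.range n, pstar (ext n c i) (ext n c (i+1)) else (0:ℝ≥0∞))
              = ∏ i ∈ Finset.range n, pstar (ext n c i) (ext n c (i+1)) := if_pos rfl
          rw [h1]; ring
    _ = ∑' c : Fin (n+1) → S,
          (if 1 ≤ n ∧ (∀ k, 1 ≤ k → k < n → ext n c k ≠ y) then p (ext n c n) y else 0)
          * (π (ext n c n) * ∏ i ∈ Finset.range n, p (ext n c (i+1)) (ext n c i)) := by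
        refine tsum_congr fun c => ?_
        rw [telescope p pstar π hpstar (ext n c) n]
    _ = ∑' c : Fin (n+1) → S,
          (if 1 ≤ n ∧ (∀ k, 1 ≤ k → k < n → ext n c k ≠ y) then (1:ℝ≥0∞) else 0)
          * (π (ext n c 0) * p (ext n c 0) y
            * ∏ i ∈ Finset.range n, p (ext n c i) (ext n c (i+1))) := by
        refine tsum_rev n _ _ fun c => ?_
        have hcond : (1 ≤ n ∧ ∀ k, 1 ≤ k → k < n → ext n (revE n c) k ≠ y)
            ↔ (1 ≤ n ∧ ∀ k, 1 ≤ k → k < n → ext n c k ≠ y) := by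
          constructor <;> rintro ⟨h1, h2⟩ <;> refine ⟨h1, fun k hk1 hk2 => ?_⟩
          · have := h2 (n - k) (by omega) (by omega)
            rw [ext_revE, show n - (n - k) = k by omega] at this
            exact this
          · rw [ext_revE]
            exact h2 (n - k) (by omega) (by omega)
        have hn' : ext n (revE n c) n = ext n c 0 := by
          rw [ext_revE, Nat.sub_self]
        have hprod : ∏ i ∈ Finset.range n, p (ext n (revE n c) (i+1)) (ext n (revE n c) i)
            = ∏ i ∈ Finset.range n, p (ext n c i) (ext n c (i+1)) := by
          calc ∏ i ∈ Finset.range n, p (ext n (revE n c) (i+1)) (ext n (revE n c) i)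
              = ∏ i ∈ Finset.range n, p (ext n c (n - 1 - i)) (ext n c (n - 1 - i + 1)) := by
                refine Finset.prod_congr rfl fun i hi => ?_
                have hi' := Finset.mem_range.mp hi
                rw [ext_revE, ext_revE, show n - (i+1) = n - 1 - i by omega,
                  show n - i = n - 1 - i + 1 by omega]
            _ = _ := Finset.prod_range_reflect (fun i => p (ext n c i) (ext n c (i+1))) n
        by_cases h : 1 ≤ n ∧ ∀ k, 1 ≤ k → k < n → ext n c k ≠ y
        · rw [if_pos (hcond.mpr h), if_pos h, hn', hprod]; ring
        · rw [if_neg (fun hh => h (hcond.mp hh)), if_neg h, zero_mul, zero_mul]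
    _ = ∑' c : Fin (n+1) → S, ∑' x,
          π x * p x y * ((if 1 ≤ n ∧ (∀ k, 1 ≤ k → k < n → ext n c k ≠ y) then (1:ℝ≥0∞) else 0)
            * (if ext n c 0 = x then
                ∏ i ∈ Finset.range n, p (ext n c i) (ext n c (i+1)) else 0)) := by
        refine tsum_congr fun c => ?_
        refine ((tsum_eq_single (ext n c 0) fun x hx => ?_).trans ?_).symm
        · have h0 : (if ext n c 0 = x then
              ∏ i ∈ Finset.range n, p (ext n c i) (ext n c (i+1)) else (0:ℝ≥0∞)) = 0 :=
            if_neg fun h => hx h.symm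
          rw [h0, mul_zero, mul_zero]
        · have h1 : (if ext n c 0 = ext n c 0 then
              ∏ i ∈ Finset.range n, p (ext n c i) (ext n c (i+1)) else (0:ℝ≥0∞))
              = ∏ i ∈ Finset.range n, p (ext n c i) (ext n c (i+1)) := if_pos rfl
          rw [h1]; ring
    _ = ∑' x, ∑' c : Fin (n+1) → S,
          π x * p x y * ((if 1 ≤ n ∧ (∀ k, 1 ≤ k → k < n → ext n c k ≠ y) then (1:ℝ≥0∞) else 0)
            * (if ext n c 0 = x then
                ∏ i ∈ Finset.range n, p (ext n c i) (ext n c (i+1)) else 0)) :=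
        ENNReal.tsum_comm
    _ = _ := by
        refine tsum_congr fun x => ?_
        rw [lintegral_cyl p μ hμ x n _ hgdep, ENNReal.tsum_mul_left]

end NuAux

/-- The second marginal of `ν` satisfies `ν₂(y) = E_π(p(C_0, y) H_y)`. -/
theorem nu_second_marginal
    {S : Type*} [MeasurableSpace S] [MeasurableSingletonClass S] [Countable S]
    (p : S → S → ℝ≥0∞) (π : S → ℝ≥0∞)
    (hstoch : ∀ x, ∑' y, p x y = 1)
    (hnoloop : ∀ x, p x x = 0)
    -- irreducibility
    (hirr : ∀ x y : S, ∃ n : ℕ, ∃ c : ℕ → S, c 0 = x ∧ c n = y ∧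
      ∀ i < n, p (c i) (c (i + 1)) ≠ 0)
    -- `π` is an invariant probability distribution, everywhere positive
    (hπpos : ∀ x, 0 < π x) (hπprob : ∑' x, π x = 1)
    (hinv : ∀ y, ∑' x, π x * p x y = π y)
    -- the time-reversed transition matrix `p*`
    (pstar : S → S → ℝ≥0∞)
    (hpstar : ∀ x y, pstar x y * π x = π y * p y x)
    -- `μstar x` is the law of the reversed chain started at `x`,
    -- `μ x` is the law of the chain itself started at `x`
    (μstar μ : S → Measure (ℕ → S))
    (hμstar : IsMarkovChainLaw pstar μstar)
    (hμ : IsMarkovChainLaw p μ)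
    (ν : S → S → ℝ≥0∞)
    (hν : ∀ x y, ν x y = π x * ∫⁻ ω, sumToHit p y ω ∂(μstar x)) :
    ∀ y : S, (∑' x, ν x y) = ∑' x, π x * p x y * ∫⁻ ω, hitTime y ω ∂(μ x) := by
  intro y
  have hiff : ∀ (n : ℕ) (ω ω' : ℕ → S), (∀ i ≤ n, ω i = ω' i) →
      ((1 ≤ n ∧ ∀ k, 1 ≤ k → k < n → ω k ≠ y) ↔ (1 ≤ n ∧ ∀ k, 1 ≤ k → k < n → ω' k ≠ y)) := by
    intro n ω ω' h
    constructor <;> rintro ⟨h1, h2⟩ <;> refine ⟨h1, fun k hk1 hk2 => ?_⟩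
    · rw [← h k hk2.le]; exact h2 k hk1 hk2
    · rw [h k hk2.le]; exact h2 k hk1 hk2
  have hfm : ∀ n : ℕ, Measurable (fun ω : ℕ → S =>
      if 1 ≤ n ∧ (∀ k, 1 ≤ k → k < n → ω k ≠ y) then p (ω n) y else 0) := by
    intro n
    refine NuAux.measurable_dep n _ fun ω ω' h => ?_
    by_cases hc : 1 ≤ n ∧ ∀ k, 1 ≤ k → k < n → ω k ≠ y
    · rw [if_pos hc, if_pos ((hiff n ω ω' h).mp hc), h n le_rfl]
    · rw [if_neg hc, if_neg (fun hc' => hc ((hiff n ω ω' h).mpr hc'))]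
  have hgm : ∀ n : ℕ, Measurable (fun ω : ℕ → S =>
      if 1 ≤ n ∧ (∀ k, 1 ≤ k → k < n → ω k ≠ y) then (1:ℝ≥0∞) else 0) := by
    intro n
    refine NuAux.measurable_dep n _ fun ω ω' h => ?_
    by_cases hc : 1 ≤ n ∧ ∀ k, 1 ≤ k → k < n → ω k ≠ y
    · rw [if_pos hc, if_pos ((hiff n ω ω' h).mp hc)]
    · rw [if_neg hc, if_neg (fun hc' => hc ((hiff n ω ω' h).mpr hc'))]
  calc (∑' x, ν x y)
      = ∑' x, π x * ∫⁻ ω, sumToHit p y ω ∂(μstar x) := tsum_congr fun x => hν x y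
    _ = ∑' x, ∑' n : ℕ, π x * ∫⁻ ω,
          (if 1 ≤ n ∧ (∀ k, 1 ≤ k → k < n → ω k ≠ y) then p (ω n) y else 0) ∂ μstar x := by
        refine tsum_congr fun x => ?_
        unfold sumToHit
        rw [lintegral_tsum fun n => (hfm n).aemeasurable, ENNReal.tsum_mul_left]
    _ = ∑' n : ℕ, ∑' x, π x * ∫⁻ ω,
          (if 1 ≤ n ∧ (∀ k, 1 ≤ k → k < n → ω k ≠ y) then p (ω n) y else 0) ∂ μstar x :=
        ENNReal.tsum_comm
    _ = ∑' n : ℕ, ∑' x, π x * p x y * ∫⁻ ω,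
          (if 1 ≤ n ∧ (∀ k, 1 ≤ k → k < n → ω k ≠ y) then (1:ℝ≥0∞) else 0) ∂ μ x :=
        tsum_congr fun n => NuAux.key_step p pstar π hpstar μstar μ hμstar hμ y n
    _ = ∑' x, ∑' n : ℕ, π x * p x y * ∫⁻ ω,
          (if 1 ≤ n ∧ (∀ k, 1 ≤ k → k < n → ω k ≠ y) then (1:ℝ≥0∞) else 0) ∂ μ x :=
        ENNReal.tsum_comm
    _ = ∑' x, π x * p x y * ∫⁻ ω, hitTime y ω ∂(μ x) := by
        refine tsum_congr fun x => ?_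
        unfold hitTime
        rw [lintegral_tsum fun n => (hgm n).aemeasurable, ENNReal.tsum_mul_left]
end
end

section
/- Let $(T_{1,i})$ be i.i.d. copies of the hitting time of $0$ by the symmetric simple random walk started at $1$. Then for any $x,\varepsilon,K>0$, $\lim_{n\to\infty}\mathbb{P}\big(\inf_{0\le k\le\lfloor x\sqrt{n}\rfloor} \frac{1}{\sqrt{n}}\sum_{i=k}^{k+\lfloor\varepsilon\sqrt{n}\rfloor}(1+T_{1,i})\le K\big)=0$. -/
open MeasureTheory Filter Set Classical ProbabilityTheory
open scoped ENNReal BigOperators Topology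
noncomputable section
attribute [local instance] Classical.propDecidable

/-- Transition matrix of the symmetric simple random walk on `ℤ`. -/
def srwP : ℤ → ℤ → ℝ≥0∞ := fun x y =>
  if y = x + 1 ∨ y = x - 1 then 1 / 2 else 0

/-- Hitting time of `0`: `inf{n > 0 : ω n = 0}`. -/
def hit0 (ω : ℕ → ℤ) : ℕ := sInf {n | 0 < n ∧ ω n = 0}

/-! ### Auxiliary real analysis -/

lemma aux_cb_sqrt : ∀ m : ℕ, 1 ≤ m → (4:ℝ)^m ≤ 2 * Real.sqrt m * Nat.centralBinom m := by
  intro m hm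
  induction m with
  | zero => omega
  | succ m ih =>
    rcases Nat.eq_or_lt_of_le hm with h1 | h1
    · simp [← h1]
      norm_num [Nat.centralBinom]
    · have hm1 : 1 ≤ m := by omega
      have ihm := ih hm1
      have hrec : ((m+1 : ℕ) : ℝ) * Nat.centralBinom (m+1) = 2*(2*m+1) * Nat.centralBinom m := by
        exact_mod_cast congrArg (Nat.cast : ℕ → ℝ) (Nat.succ_mul_centralBinom_succ m)
      have hmpos : (0:ℝ) < m := by exact_mod_cast hm1
      have hs : Real.sqrt m ≤ Real.sqrt (m+1) := Real.sqrt_le_sqrt (by linarith)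
      have hkey : 2 * Real.sqrt m * ((m:ℝ)+1) ≤ (2*m+1) * Real.sqrt ((m:ℝ)+1) := by
        have h1' : (2:ℝ) * Real.sqrt m * ((m:ℝ)+1) = Real.sqrt (4 * m * ((m:ℝ)+1)^2) := by
          rw [show (4:ℝ) * m * ((m:ℝ)+1)^2 = (2*((m:ℝ)+1))^2 * m by ring,
            Real.sqrt_mul (by positivity), Real.sqrt_sq (by positivity)]
          ring
        have h2' : ((2:ℝ)*m+1) * Real.sqrt ((m:ℝ)+1) = Real.sqrt ((2*(m:ℝ)+1)^2 * ((m:ℝ)+1)) := by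
          rw [Real.sqrt_mul (by positivity), Real.sqrt_sq (by positivity)]
        rw [h1', h2']
        apply Real.sqrt_le_sqrt
        nlinarith
      have hCpos : (0:ℝ) < Nat.centralBinom m := by exact_mod_cast Nat.centralBinom_pos m
      have step1 : (4:ℝ)^(m+1) ≤ 4 * (2 * Real.sqrt m * Nat.centralBinom m) := by
        rw [pow_succ]; nlinarith [pow_pos (show (0:ℝ) < 4 by norm_num) m]
      have hC1 : ((m:ℝ)+1) * (Nat.centralBinom (m+1) : ℝ) = 2*(2*(m:ℝ)+1) * Nat.centralBinom m := by
        push_cast at hrec ⊢; linarith [hrec]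
      have goal2 : 4 * (2 * Real.sqrt m * (Nat.centralBinom m : ℝ)) * ((m:ℝ)+1)
          ≤ 2 * Real.sqrt ((m:ℝ)+1) * (Nat.centralBinom (m+1) : ℝ) * ((m:ℝ)+1) := by
        rw [show 2 * Real.sqrt ((m:ℝ)+1) * (Nat.centralBinom (m+1) : ℝ) * ((m:ℝ)+1)
          = 2 * Real.sqrt ((m:ℝ)+1) * (((m:ℝ)+1) * (Nat.centralBinom (m+1) : ℝ)) by ring, hC1]
        nlinarith [Real.sqrt_nonneg ((m:ℝ)+1)]
      have hmp1 : (0:ℝ) < (m:ℝ)+1 := by positivity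
      have := (mul_le_mul_iff_of_pos_right hmp1).mp goal2
      calc (4:ℝ)^(m+1) ≤ 4 * (2 * Real.sqrt m * Nat.centralBinom m) := step1
        _ ≤ 2 * Real.sqrt ((m:ℝ)+1) * (Nat.centralBinom (m+1) : ℝ) := this
        _ = 2 * Real.sqrt ((m+1 : ℕ) : ℝ) * Nat.centralBinom (m+1) := by push_cast; ring

lemma aux_catalan_pos (m : ℕ) : 0 < catalan m := by
  rcases Nat.eq_zero_or_pos (catalan m) with h | h
  · exfalso
    have := succ_mul_catalan_eq_centralBinom m
    rw [h, mul_zero] at this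
    exact Nat.centralBinom_ne_zero m this.symm
  · exact h

lemma aux_catalan_term_lb {t m : ℕ} (ht : 1 ≤ t) (h1 : t ≤ m) (h2 : m ≤ 2*t) :
    1/(17 * t * Real.sqrt t) ≤ (catalan m : ℝ) * (1/2)^(2*m+1) := by
  have hm : 1 ≤ m := le_trans ht h1
  have hcb := aux_cb_sqrt m hm
  have hcat : ((m:ℝ)+1) * (catalan m : ℝ) = Nat.centralBinom m := by
    exact_mod_cast congrArg (Nat.cast : ℕ → ℝ) (succ_mul_catalan_eq_centralBinom m)
  have h4 : (4:ℝ)^m ≤ 2 * Real.sqrt m * (((m:ℝ)+1) * catalan m) := by rw [hcat]; exact hcb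
  have hhalf : ((1:ℝ)/2)^(2*m+1) = 1 / (2 * 4^m) := by
    rw [pow_succ, pow_mul, show ((1:ℝ)/2)^2 = 1/4 by norm_num, div_pow, one_pow]
    ring
  rw [hhalf]
  have htR : (1:ℝ) ≤ t := by exact_mod_cast ht
  have hsm : Real.sqrt m ≤ Real.sqrt 2 * Real.sqrt t := by
    rw [← Real.sqrt_mul (by norm_num)]
    apply Real.sqrt_le_sqrt; exact_mod_cast h2
  have hm3 : ((m:ℝ)+1) ≤ 3 * t := by
    have : (m:ℝ) ≤ 2*t := by exact_mod_cast h2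
    linarith
  have hstpos : 0 < Real.sqrt t := Real.sqrt_pos.mpr (by linarith)
  have hsqrt2 : Real.sqrt 2 ≤ 1.415 := by
    rw [show (2:ℝ) = 1.415^2 - 0.002225 by norm_num]
    calc Real.sqrt (1.415^2 - 0.002225) ≤ Real.sqrt (1.415^2) := Real.sqrt_le_sqrt (by norm_num)
      _ = 1.415 := Real.sqrt_sq (by norm_num)
  have htt : (0:ℝ) ≤ t * Real.sqrt t := by positivity
  have key : 2 * Real.sqrt m * (((m:ℝ)+1)) ≤ 8.5 * (t * Real.sqrt t) := by
    have h0 : 0 ≤ Real.sqrt m := Real.sqrt_nonneg _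
    have step : 2 * Real.sqrt m * ((m:ℝ)+1) ≤ 2 * (Real.sqrt 2 * Real.sqrt t) * (3*t) := by
      apply mul_le_mul _ hm3 (by positivity) (by positivity)
      nlinarith
    have step2 : Real.sqrt 2 * (t * Real.sqrt t) ≤ 1.415 * (t * Real.sqrt t) :=
      mul_le_mul_of_nonneg_right hsqrt2 htt
    calc 2 * Real.sqrt m * ((m:ℝ)+1) ≤ 2 * (Real.sqrt 2 * Real.sqrt t) * (3*t) := step
      _ = 6 * (Real.sqrt 2 * (t * Real.sqrt t)) := by ring
      _ ≤ 6 * (1.415 * (t * Real.sqrt t)) := by linarith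
      _ ≤ 8.5 * (t * Real.sqrt t) := by linarith
  have hcatpos : (0:ℝ) < catalan m := by exact_mod_cast aux_catalan_pos m
  have h5 : (4:ℝ)^m ≤ 8.5 * (t * Real.sqrt t) * catalan m := by
    calc (4:ℝ)^m ≤ 2 * Real.sqrt m * (((m:ℝ)+1) * catalan m) := h4
      _ = (2 * Real.sqrt m * ((m:ℝ)+1)) * catalan m := by ring
      _ ≤ 8.5 * (t * Real.sqrt t) * catalan m :=
          mul_le_mul_of_nonneg_right key (le_of_lt hcatpos)
  rw [show (catalan m : ℝ) * (1 / (2 * 4^m)) = (catalan m : ℝ) / (2 * 4^m) by ring,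
    div_le_div_iff₀ (by positivity) (by positivity)]
  nlinarith [h5]

lemma aux_sqrt_atTop : Tendsto Real.sqrt atTop atTop := by
  apply tendsto_atTop_atTop.mpr
  intro b
  refine ⟨b^2, fun a ha => ?_⟩
  calc b ≤ |b| := le_abs_self b
    _ = Real.sqrt (b^2) := (Real.sqrt_sq_eq_abs b).symm
    _ ≤ Real.sqrt a := Real.sqrt_le_sqrt ha

lemma aux_tendsto (x c : ℝ) (hc : 0 < c) :
    Tendsto (fun n : ℕ => (x * Real.sqrt n + 1)
      * Real.exp (-(c * Real.sqrt (Real.sqrt n)))) atTop (nhds 0) := by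
  have hh : Tendsto (fun y : ℝ => (x * y^2 + 1) * Real.exp (-(c * y))) atTop (nhds 0) := by
    have hcy : Tendsto (fun y : ℝ => c * y) atTop atTop :=
      Tendsto.const_mul_atTop hc tendsto_id
    have h1 : Tendsto (fun y : ℝ => (c*y)^2 * Real.exp (-(c*y))) atTop (nhds 0) :=
      (Real.tendsto_pow_mul_exp_neg_atTop_nhds_zero 2).comp hcy
    have h2 : Tendsto (fun y : ℝ => Real.exp (-(c*y))) atTop (nhds 0) :=
      Real.tendsto_exp_neg_atTop_nhds_zero.comp hcy
    have := (h1.const_mul (x / c^2)).add h2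
    rw [mul_zero, zero_add] at this
    apply this.congr
    intro y
    field_simp
  have hyn : Tendsto (fun n : ℕ => Real.sqrt (Real.sqrt n)) atTop atTop :=
    aux_sqrt_atTop.comp (aux_sqrt_atTop.comp tendsto_natCast_atTop_atTop)
  have := hh.comp hyn
  apply this.congr
  intro n
  simp only [Function.comp_apply]
  rw [Real.sq_sqrt (Real.sqrt_nonneg _)]

/-! ### hit0 lemmas -/

lemma hit0_eq_iff {ω : ℕ → ℤ} {s : ℕ} (hs : 0 < s) :
    hit0 ω = s ↔ (ω s = 0 ∧ ∀ n, 0 < n → n < s → ω n ≠ 0) := by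
  constructor
  · intro h
    have hne : {n | 0 < n ∧ ω n = 0}.Nonempty := by
      by_contra hemp
      rw [Set.not_nonempty_iff_eq_empty] at hemp
      rw [hit0, hemp, Nat.sInf_empty] at h
      omega
    have hmem := Nat.sInf_mem hne
    rw [hit0] at h
    rw [h] at hmem
    refine ⟨hmem.2, fun n hn hns h0 => ?_⟩
    have := Nat.sInf_le (show n ∈ {n | 0 < n ∧ ω n = 0} from ⟨hn, h0⟩)
    omega
  · rintro ⟨h0, hlt⟩
    apply le_antisymm
    · exact Nat.sInf_le ⟨hs, h0⟩
    · by_contra hc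
      push_neg at hc
      have hmem := Nat.sInf_mem (⟨s, hs, h0⟩ : {n | 0 < n ∧ ω n = 0}.Nonempty)
      exact hlt _ hmem.1 hc hmem.2

lemma measurableSet_hit0_eq {s : ℕ} (hs : 0 < s) :
    MeasurableSet {ω : ℕ → ℤ | hit0 ω = s} := by
  have : {ω : ℕ → ℤ | hit0 ω = s}
      = ((fun ω : ℕ → ℤ => ω s) ⁻¹' {0}) ∩
        ⋂ n, ⋂ (_ : 0 < n), ⋂ (_ : n < s), ((fun ω : ℕ → ℤ => ω n) ⁻¹' {0})ᶜ := by
    ext ω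
    simp only [Set.mem_setOf_eq, Set.mem_inter_iff, Set.mem_preimage, Set.mem_singleton_iff,
      Set.mem_iInter, Set.mem_compl_iff, hit0_eq_iff hs]
  rw [this]
  exact ((measurable_pi_apply s) (measurableSet_singleton _)).inter
    (MeasurableSet.iInter fun n => MeasurableSet.iInter fun _ => MeasurableSet.iInter fun _ =>
      ((measurable_pi_apply n) (measurableSet_singleton _)).compl)

lemma measurable_hit0 : Measurable hit0 := by
  have key : ∀ s : ℕ, MeasurableSet (hit0 ⁻¹' {s}) := by
    intro s
    rcases Nat.eq_zero_or_pos s with rfl | hs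
    · have : hit0 ⁻¹' {0} = (⋃ s : ℕ, ⋃ (_ : 0 < s), {ω : ℕ → ℤ | hit0 ω = s})ᶜ := by
        ext ω
        simp only [Set.mem_preimage, Set.mem_singleton_iff, Set.mem_compl_iff, Set.mem_iUnion,
          Set.mem_setOf_eq]
        constructor
        · rintro h ⟨s, hs, h2⟩; omega
        · intro h; by_contra h0; exact h ⟨hit0 ω, by omega, rfl⟩
      rw [this]
      apply MeasurableSet.compl
      apply MeasurableSet.iUnion
      intro s
      apply MeasurableSet.iUnion
      intro hs
      exact measurableSet_hit0_eq hs
    · exact measurableSet_hit0_eq hs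
  exact measurable_to_countable' key

/-! ### Dyck paths -/

open DyckStep in
def dwPath (l : List DyckStep) : ℕ → ℤ := fun i =>
  if i ≤ l.length then
    1 + ((l.take i).count U : ℤ) - ((l.take i).count D : ℤ) else 0

open DyckStep

lemma count_take_succ (l : List DyckStep) (a : DyckStep) {i : ℕ} (h : i < l.length) :
    (l.take (i+1)).count a = (l.take i).count a + if l[i] = a then 1 else 0 := by
  rw [List.take_succ, List.getElem?_eq_getElem h]
  rw [List.count_append, Option.toList_some, List.count_singleton']

lemma dwPath_zero (l : List DyckStep) : dwPath l 0 = 1 := by simp [dwPath]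

lemma dwPath_succ_U (l : List DyckStep) {i : ℕ} (h : i < l.length) (hx : l[i] = U) :
    dwPath l (i+1) = dwPath l i + 1 := by
  have h1 : i + 1 ≤ l.length := h
  have h2 : i ≤ l.length := le_of_lt h
  rw [dwPath]
  simp only [h1, h2, if_pos, dwPath]
  rw [count_take_succ l U h, count_take_succ l D h, hx]
  simp
  ring

lemma dwPath_succ_D (l : List DyckStep) {i : ℕ} (h : i < l.length) (hx : l[i] = D) :
    dwPath l (i+1) = dwPath l i - 1 := by
  have h1 : i + 1 ≤ l.length := h
  have h2 : i ≤ l.length := le_of_lt h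
  rw [dwPath]
  simp only [h1, h2, if_pos, dwPath]
  rw [count_take_succ l U h, count_take_succ l D h, hx]
  simp
  ring

lemma dwPath_pos (p : DyckWord) {i : ℕ} (h : i ≤ p.toList.length) :
    1 ≤ dwPath p.toList i := by
  have h' := p.count_D_le_count_U i
  rw [dwPath, if_pos h]
  have : ((p.toList.take i).count D : ℤ) ≤ ((p.toList.take i).count U : ℤ) := by exact_mod_cast h'
  omega

lemma dwPath_length (p : DyckWord) : dwPath p.toList p.toList.length = 1 := by
  rw [dwPath, if_pos (le_refl _), List.take_length, p.count_U_eq_count_D]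
  ring

lemma dwPath_length_succ (p : DyckWord) : dwPath p.toList (p.toList.length + 1) = 0 := by
  rw [dwPath, if_neg (by omega)]

lemma srwP_step (p : DyckWord) {i : ℕ} (h : i < p.toList.length + 1) :
    srwP (dwPath p.toList i) (dwPath p.toList (i+1)) = 1/2 := by
  rcases Nat.lt_or_ge i p.toList.length with h' | h'
  · rw [srwP]
    cases hx : p.toList[i]
    · rw [dwPath_succ_U _ h' hx, if_pos (Or.inl rfl)]
    · rw [dwPath_succ_D _ h' hx, if_pos (Or.inr rfl)]
  · have : i = p.toList.length := by omega
    subst this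
    rw [dwPath_length, dwPath_length_succ, srwP]
    norm_num

lemma dwPath_inj {p q : DyckWord} (hlen : p.toList.length = q.toList.length)
    (h : ∀ i, i ≤ p.toList.length → dwPath p.toList i = dwPath q.toList i) : p = q := by
  ext1
  apply List.ext_getElem hlen
  intro i hi hi2
  have h1 := h i (le_of_lt hi)
  have h2 := h (i+1) hi
  cases hx : p.toList[i] <;> cases hy : q.toList[i]
  · rfl
  · rw [dwPath_succ_U _ hi hx, dwPath_succ_D _ hi2 hy, h1] at h2; omega
  · rw [dwPath_succ_D _ hi hx, dwPath_succ_U _ hi2 hy, h1] at h2; omega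
  · rfl

/-! ### Cylinders and measure bounds -/

def Cyl (c : ℕ → ℤ) (s : ℕ) : Set (ℕ → ℤ) := {ω | ∀ i ≤ s, ω i = c i}

lemma measurableSet_Cyl (c : ℕ → ℤ) (s : ℕ) : MeasurableSet (Cyl c s) := by
  have : Cyl c s = ⋂ i, ⋂ (_ : i ≤ s), (fun ω : ℕ → ℤ => ω i) ⁻¹' {c i} := by
    ext ω; simp [Cyl]
  rw [this]
  apply MeasurableSet.iInter
  intro i
  apply MeasurableSet.iInter
  intro _
  exact (measurable_pi_apply i) (measurableSet_singleton _)

lemma meas_hit_lb (μ : ℤ → Measure (ℕ → ℤ)) (hμ : IsMarkovChainLaw srwP μ) (m : ℕ) :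
    (catalan m : ℝ≥0∞) * (1/2)^(2*m+1) ≤ μ 1 {ω | hit0 ω = 2*m+1} := by
  set ι := {p : DyckWord // p.semilength = m} with hι
  have hlen : ∀ p : ι, p.1.toList.length = 2*m := fun p => by
    rw [← p.1.two_mul_semilength_eq_length, p.2]
  set f : ι → Set (ℕ → ℤ) := fun p => Cyl (dwPath p.1.toList) (2*m+1) with hf
  have hsub : ∀ p : ι, f p ⊆ {ω | hit0 ω = 2*m+1} := by
    intro p ω hω
    have hl := hlen p
    rw [Set.mem_setOf_eq, hit0_eq_iff (by omega)]
    constructor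
    · rw [hω (2*m+1) (le_refl _), ← hl, dwPath_length_succ]
    · intro n hn hns
      rw [hω n (by omega)]
      have : 1 ≤ dwPath p.1.toList n := dwPath_pos p.1 (by omega)
      omega
  have hdisj : Pairwise (Function.onFun Disjoint f) := by
    intro p q hpq
    rw [Function.onFun, Set.disjoint_left]
    intro ω hp hq
    apply hpq
    apply Subtype.ext
    apply dwPath_inj (by rw [hlen p, hlen q])
    intro i hi
    rw [← hp i (by rw [hlen p] at hi; omega), ← hq i (by rw [hlen p] at hi; omega)]
  have hmeasf : ∀ p : ι, MeasurableSet (f p) := fun p => measurableSet_Cyl _ _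
  have hval : ∀ p : ι, μ 1 (f p) = (1/2)^(2*m+1) := by
    intro p
    have h0 : dwPath p.1.toList 0 = 1 := dwPath_zero _
    show μ 1 (Cyl (dwPath p.1.toList) (2*m+1)) = (1/2)^(2*m+1)
    have := hμ 1 (2*m+1) (dwPath p.1.toList)
    rw [show Cyl (dwPath p.1.toList) (2*m+1) = {ω | ∀ i ≤ 2*m+1, ω i = dwPath p.1.toList i} from rfl,
      this, if_pos h0]
    rw [Finset.prod_congr rfl (fun i hi => srwP_step p.1 (by
      rw [hlen p]; exact Finset.mem_range.mp hi))]
    rw [Finset.prod_const, Finset.card_range]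
  calc (catalan m : ℝ≥0∞) * (1/2)^(2*m+1)
      = ∑' p : ι, μ 1 (f p) := by
        rw [tsum_congr hval, tsum_fintype, Finset.sum_const, Finset.card_univ,
          DyckWord.card_dyckWord_semilength_eq_catalan, nsmul_eq_mul]
    _ = μ 1 (⋃ p : ι, f p) := (measure_iUnion hdisj hmeasf).symm
    _ ≤ μ 1 {ω | hit0 ω = 2*m+1} := measure_mono (Set.iUnion_subset hsub)

lemma hit0_tail_lb (μ : ℤ → Measure (ℕ → ℤ)) (hμ : IsMarkovChainLaw srwP μ)
    {t : ℕ} (ht : 1 ≤ t) :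
    ENNReal.ofReal (1/(17 * Real.sqrt t)) ≤ μ 1 {ω | t < hit0 ω} := by
  have hdisj : (↑(Finset.Icc t (2*t)) : Set ℕ).Pairwise
      (Function.onFun Disjoint (fun m => {ω : ℕ → ℤ | hit0 ω = 2*m+1})) := by
    intro a _ b _ hab
    rw [Function.onFun, Set.disjoint_left]
    intro ω ha hb
    rw [Set.mem_setOf_eq] at ha hb
    omega
  have hsum : ∑ m ∈ Finset.Icc t (2*t), μ 1 {ω | hit0 ω = 2*m+1}
      ≤ μ 1 {ω | t < hit0 ω} := by
    rw [← measure_biUnion_finset hdisj (fun m _ => measurableSet_hit0_eq (by omega))]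
    apply measure_mono
    apply Set.iUnion₂_subset
    intro m hm
    rw [Finset.mem_Icc] at hm
    intro ω hω
    rw [Set.mem_setOf_eq] at hω ⊢
    omega
  refine le_trans ?_ hsum
  have hterm : ∀ m ∈ Finset.Icc t (2*t),
      ENNReal.ofReal (1/(17 * t * Real.sqrt t)) ≤ μ 1 {ω | hit0 ω = 2*m+1} := by
    intro m hm
    rw [Finset.mem_Icc] at hm
    refine le_trans ?_ (meas_hit_lb μ hμ m)
    calc ENNReal.ofReal (1/(17 * t * Real.sqrt t))
        ≤ ENNReal.ofReal ((catalan m : ℝ) * (1/2)^(2*m+1)) :=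
          ENNReal.ofReal_le_ofReal (aux_catalan_term_lb ht hm.1 hm.2)
      _ = (catalan m : ℝ≥0∞) * (1/2)^(2*m+1) := by
          rw [ENNReal.ofReal_mul (by positivity), ENNReal.ofReal_pow (by norm_num),
            ENNReal.ofReal_natCast, show ENNReal.ofReal ((1:ℝ)/2) = (1/2 : ℝ≥0∞) by
              rw [ENNReal.ofReal_div_of_pos (by norm_num)]; norm_num]
  calc ENNReal.ofReal (1/(17 * Real.sqrt t))
      ≤ (Finset.Icc t (2*t)).card • ENNReal.ofReal (1/(17 * t * Real.sqrt t)) := by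
        rw [Nat.card_Icc, nsmul_eq_mul]
        have hc : (2*t+1-t : ℕ) = t+1 := by omega
        rw [hc, ← ENNReal.ofReal_natCast, ← ENNReal.ofReal_mul (by positivity)]
        apply ENNReal.ofReal_le_ofReal
        have htR : (1:ℝ) ≤ t := by exact_mod_cast ht
        have hst : 0 < Real.sqrt t := Real.sqrt_pos.mpr (by linarith)
        rw [div_le_iff₀ (by positivity)]
        push_cast
        rw [show ((t:ℝ)+1) * (1/(17 * t * Real.sqrt t)) * (17 * Real.sqrt t)
          = ((t:ℝ)+1) * (Real.sqrt t / Real.sqrt t) / t by ring, div_self (ne_of_gt hst)]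
        rw [le_div_iff₀ (by linarith)]
        linarith
    _ ≤ ∑ m ∈ Finset.Icc t (2*t), μ 1 {ω | hit0 ω = 2*m+1} := by
        rw [← Finset.sum_const]
        exact Finset.sum_le_sum hterm

/-- If `(T_{1,i})` are i.i.d. copies of the hitting time of `0` by the symmetric simple
random walk started at `1`, then for any `x, ε, K > 0`,
`ℙ(inf_{0 ≤ k ≤ ⌊x√n⌋} n^{-1/2} ∑_{i=k}^{k+⌊ε√n⌋} (1 + T_{1,i}) ≤ K) → 0`. -/
theorem srw_min_of_block_sums_tendsto_zero
    -- the simple random walk laws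
    (μ : ℤ → Measure (ℕ → ℤ)) (hμ : IsMarkovChainLaw srwP μ)
    (hprob : ∀ z, IsProbabilityMeasure (μ z))
    -- an i.i.d. sequence of copies of the hitting time
    {Ω : Type*} [MeasurableSpace Ω] (P : Measure Ω) [IsProbabilityMeasure P]
    (T : ℕ → Ω → ℕ) (hTmeas : ∀ i, Measurable (T i))
    (hTindep : iIndepFun T P)
    (hTdist : ∀ i, Measure.map (T i) P = Measure.map hit0 (μ 1))
    (x ε K : ℝ) (hx : 0 < x) (hε : 0 < ε) (hK : 0 < K) :
    Tendsto (fun n : ℕ => P {ω | ∃ k ≤ Nat.floor (x * Real.sqrt n),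
        ((∑ i ∈ Finset.Icc k (k + Nat.floor (ε * Real.sqrt n)),
          (1 + T i ω) : ℕ) : ℝ) ≤ K * Real.sqrt n})
      atTop (nhds 0) := by
  have hsK : 0 < Real.sqrt K := Real.sqrt_pos.mpr hK
  set c : ℝ := ε / (17 * Real.sqrt K) with hc
  have hcpos : 0 < c := by positivity
  haveI := hprob 1
  have key : ∀ n : ℕ, 1 ≤ Nat.floor (K * Real.sqrt n) → (1:ℝ) ≤ n →
      P {ω | ∃ k ≤ Nat.floor (x * Real.sqrt n),
        ((∑ i ∈ Finset.Icc k (k + Nat.floor (ε * Real.sqrt n)),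
          (1 + T i ω) : ℕ) : ℝ) ≤ K * Real.sqrt n}
      ≤ ENNReal.ofReal ((x * Real.sqrt n + 1)
          * Real.exp (-(c * Real.sqrt (Real.sqrt n)))) := by
    intro n htn hn1
    set s : ℝ := Real.sqrt n with hs
    set kn := Nat.floor (x * s) with hkn
    set mn := Nat.floor (ε * s) with hmn
    set tn := Nat.floor (K * s) with htn'
    have hs1 : (1:ℝ) ≤ s := by
      rw [hs, show (1:ℝ) = Real.sqrt 1 by simp]
      exact Real.sqrt_le_sqrt hn1
    have hmsNat : ∀ u : Set ℕ, MeasurableSet u := fun u => trivial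
    set δ : ℝ := 1/(17 * Real.sqrt tn) with hδ
    have htnR : (1:ℝ) ≤ tn := by exact_mod_cast htn
    have hstn : 1 ≤ Real.sqrt tn := Real.one_le_sqrt.mpr htnR
    have hδ0 : 0 ≤ δ := by positivity
    have hδ1 : δ ≤ 1 := by
      rw [hδ, div_le_one (by linarith)]; linarith
    set q : ℝ≥0∞ := μ 1 {ω | tn < hit0 ω} with hq
    have hqb : ENNReal.ofReal δ ≤ q := hit0_tail_lb μ hμ htn
    -- each coordinate small
    have hPi : ∀ i : ℕ, P (T i ⁻¹' Set.Iic tn) = 1 - q := by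
      intro i
      have hpre : T i ⁻¹' Set.Iic tn = (T i ⁻¹' Set.Ioi tn)ᶜ := by
        ext ω; simp [not_lt]
      rw [hpre, prob_compl_eq_one_sub ((hTmeas i) (hmsNat _))]
      congr 1
      rw [← Measure.map_apply (hTmeas i) (hmsNat _), hTdist i,
        Measure.map_apply measurable_hit0 (hmsNat _)]
      rfl
    -- inclusion into union of intersections
    have hsub : {ω | ∃ k ≤ kn, ((∑ i ∈ Finset.Icc k (k + mn), (1 + T i ω) : ℕ) : ℝ) ≤ K * s}
        ⊆ ⋃ k ∈ Finset.range (kn+1), ⋂ i ∈ Finset.Icc k (k+mn), (T i) ⁻¹' (Set.Iic tn) := by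
      rintro ω ⟨k, hk, hsum⟩
      have hk' : k ∈ Finset.range (kn+1) := Finset.mem_range.mpr (by omega)
      apply Set.mem_biUnion hk'
      rw [Set.mem_iInter₂]
      intro i hi
      have hle : 1 + T i ω ≤ ∑ j ∈ Finset.Icc k (k+mn), (1 + T j ω) :=
        Finset.single_le_sum (f := fun j => 1 + T j ω) (fun j _ => Nat.zero_le _) hi
      have hcast : ((1 + T i ω : ℕ) : ℝ)
          ≤ ((∑ j ∈ Finset.Icc k (k+mn), (1 + T j ω) : ℕ) : ℝ) := by exact_mod_cast hle
      have hTle : ((T i ω : ℕ) : ℝ) ≤ K * s := by push_cast at hcast hsum ⊢; linarith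
      exact Set.mem_preimage.mpr (Set.mem_Iic.mpr (Nat.le_floor hTle))
    -- the main chain
    have hprod : ∀ k : ℕ, P (⋂ i ∈ Finset.Icc k (k+mn), (T i) ⁻¹' (Set.Iic tn))
        = (1 - q)^(mn+1) := by
      intro k
      rw [hTindep.meas_biInter (S := Finset.Icc k (k+mn))
        (s := fun i => T i ⁻¹' Set.Iic tn) (fun i _ => ⟨Set.Iic tn, trivial, rfl⟩)]
      rw [Finset.prod_congr rfl (fun i _ => hPi i), Finset.prod_const, Nat.card_Icc]
      congr 1
      omega
    have hqδ : (1 - q)^(mn+1) ≤ ENNReal.ofReal ((1-δ)^(mn+1)) := by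
      rw [ENNReal.ofReal_pow (by linarith)]
      apply pow_le_pow_left'
      calc 1 - q ≤ 1 - ENNReal.ofReal δ := tsub_le_tsub_left hqb 1
        _ = ENNReal.ofReal (1 - δ) := by
            rw [ENNReal.ofReal_sub 1 hδ0, ENNReal.ofReal_one]
    -- real estimate
    have hA : ((kn : ℝ) + 1) ≤ x*s+1 := by
      have := Nat.floor_le (show 0 ≤ x*s by positivity)
      rw [hkn]; linarith
    have hB : (1-δ)^(mn+1) ≤ Real.exp (-(c * Real.sqrt s)) := by
      have hexp : (1-δ) ≤ Real.exp (-δ) := by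
        have := Real.add_one_le_exp (-δ); linarith
      have hC1 : 1 ≤ Real.sqrt s := Real.one_le_sqrt.mpr hs1
      have hCpos : 0 < Real.sqrt s := by linarith
      have hmn1 : ε * s ≤ ((mn : ℝ) + 1) := le_of_lt (by
        have := Nat.lt_floor_add_one (ε * s)
        rw [hmn]; push_cast; exact_mod_cast this)
      have htns : Real.sqrt tn ≤ Real.sqrt K * Real.sqrt s := by
        rw [← Real.sqrt_mul hK.le]
        exact Real.sqrt_le_sqrt (Nat.floor_le (by positivity))
      have hss : Real.sqrt s * Real.sqrt s = s := Real.mul_self_sqrt (by linarith)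
      have hexpo : c * Real.sqrt s ≤ δ * ((mn : ℝ) + 1) := by
        rw [hδ, hc]
        rw [div_mul_eq_mul_div, div_mul_eq_mul_div, div_le_div_iff₀ (by positivity) (by positivity)]
        have e1 : ε * Real.sqrt s * (17 * Real.sqrt tn)
            ≤ ε * Real.sqrt s * (17 * (Real.sqrt K * Real.sqrt s)) := by
          apply mul_le_mul_of_nonneg_left (by linarith) (by positivity)
        have e2 : ε * Real.sqrt s * (17 * (Real.sqrt K * Real.sqrt s))
            = 17 * Real.sqrt K * (ε * s) := by
          rw [show ε * Real.sqrt s * (17 * (Real.sqrt K * Real.sqrt s))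
            = 17 * Real.sqrt K * (ε * (Real.sqrt s * Real.sqrt s)) by ring, hss]
        have e3 : 17 * Real.sqrt K * (ε * s) ≤ 17 * Real.sqrt K * ((mn : ℝ) + 1) := by
          apply mul_le_mul_of_nonneg_left hmn1 (by positivity)
        calc ε * Real.sqrt s * (17 * Real.sqrt tn)
            ≤ 17 * Real.sqrt K * (ε * s) := by rw [← e2]; exact e1
          _ ≤ 17 * Real.sqrt K * ((mn : ℝ) + 1) := e3
          _ = 1 * ((mn : ℝ) + 1) * (17 * Real.sqrt K) := by ring
      calc (1-δ)^(mn+1) ≤ (Real.exp (-δ))^(mn+1) :=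
            pow_le_pow_left₀ (by linarith) hexp _
        _ = Real.exp (-δ * (mn+1)) := by
            rw [← Real.exp_nat_mul]; congr 1; push_cast; ring
        _ ≤ Real.exp (-(c * Real.sqrt s)) := by
            apply Real.exp_le_exp.mpr
            push_cast
            linarith
    calc P {ω | ∃ k ≤ kn, ((∑ i ∈ Finset.Icc k (k + mn), (1 + T i ω) : ℕ) : ℝ) ≤ K * s}
        ≤ P (⋃ k ∈ Finset.range (kn+1), ⋂ i ∈ Finset.Icc k (k+mn), (T i) ⁻¹' (Set.Iic tn)) :=
          measure_mono hsub
      _ ≤ ∑ k ∈ Finset.range (kn+1),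
            P (⋂ i ∈ Finset.Icc k (k+mn), (T i) ⁻¹' (Set.Iic tn)) :=
          measure_biUnion_finset_le _ _
      _ = (kn+1) • (1 - q)^(mn+1) := by
          rw [Finset.sum_congr rfl (fun k _ => hprod k), Finset.sum_const, Finset.card_range]
      _ ≤ (kn+1) • ENNReal.ofReal ((1-δ)^(mn+1)) := by
          exact nsmul_le_nsmul_right hqδ _
      _ = ENNReal.ofReal (((kn : ℝ)+1) * (1-δ)^(mn+1)) := by
          rw [nsmul_eq_mul, ← ENNReal.ofReal_natCast (kn+1),
            ← ENNReal.ofReal_mul (by positivity)]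
          congr 2
          push_cast
          ring
      _ ≤ ENNReal.ofReal ((x * s + 1) * Real.exp (-(c * Real.sqrt s))) := by
          apply ENNReal.ofReal_le_ofReal
          apply mul_le_mul hA hB (pow_nonneg (by linarith) _) (by positivity)
  have hlim : Tendsto (fun n : ℕ => ENNReal.ofReal ((x * Real.sqrt n + 1)
      * Real.exp (-(c * Real.sqrt (Real.sqrt n))))) atTop (nhds 0) := by
    rw [show (0:ℝ≥0∞) = ENNReal.ofReal 0 from ENNReal.ofReal_zero.symm]
    exact ENNReal.tendsto_ofReal (aux_tendsto x c hcpos)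
  have hev : ∀ᶠ n : ℕ in atTop, 1 ≤ Nat.floor (K * Real.sqrt n) ∧ (1:ℝ) ≤ n := by
    have h1 : Tendsto (fun n : ℕ => K * Real.sqrt n) atTop atTop :=
      Tendsto.const_mul_atTop hK (aux_sqrt_atTop.comp tendsto_natCast_atTop_atTop)
    filter_upwards [h1.eventually_ge_atTop 1, eventually_ge_atTop 1] with n hn hn'
    exact ⟨Nat.le_floor (by exact_mod_cast hn), by exact_mod_cast hn'⟩
  refine tendsto_of_tendsto_of_tendsto_of_le_of_le' tendsto_const_nhds hlim
    (Eventually.of_forall fun n => zero_le) ?_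
  filter_upwards [hev] with n hn
  exact key n hn.1 hn.2
end
end
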